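/- The Laplace mechanism satisfies (ε, 0)-differential privacy: for a query f : databases → ℝ^k with ℓ₁-sensitivity Δf, the mechanism M(D) = f(D) + (Y₁, …, Y_k) with Y_i i.i.d. Laplace(Δf/ε) is ε-differentially private. -/

import Mathlib

open MeasureTheory
open scoped ENNReal

/-- The Laplace distribution on `ℝ` with scale `b`, given by density
`(1/(2b)) exp(-|y|/b)` with respect to Lebesgue measure. -/
noncomputable def laplaceMeasure (b : ℝ) : Measure ℝ :=
  volume.withDensity fun y => ENNReal.ofReal ((1 / (2 * b)) * Real.exp (-|y| / b))

namespace LaplaceDP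

instance (b : ℝ) : SigmaFinite (laplaceMeasure b) := by
  unfold laplaceMeasure; infer_instance

/-- Measurability of the (shifted) Laplace density. -/
theorem measurable_dens (b a : ℝ) :
    Measurable fun y : ℝ => ENNReal.ofReal ((1 / (2 * b)) * Real.exp (-|y - a| / b)) := by
  have hcont : Continuous fun y : ℝ => Real.exp (-|y - a| / b) :=
    Real.continuous_exp.comp ((continuous_abs.comp (continuous_id.sub continuous_const)).neg.div_const b)
  exact (hcont.measurable.const_mul (1 / (2 * b))).ennreal_ofReal

/-- Tonelli: the lintegral of a product of single-coordinate functions over a finite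
product of copies of a sigma-finite measure factorizes. -/
theorem lintegral_fin_prod {n : ℕ} (μ : Measure ℝ) [SigmaFinite μ]
    (F : Fin n → ℝ → ℝ≥0∞) (hF : ∀ i, Measurable (F i)) :
    ∫⁻ x, ∏ i, F i (x i) ∂(Measure.pi fun _ : Fin n => μ) = ∏ i, ∫⁻ y, F i y ∂μ := by
  induction n with
  | zero =>
      simp [lintegral_const]
  | succ n ih =>
      have h := (measurePreserving_piFinSuccAbove (fun _ : Fin (n + 1) => μ) 0).symm
      have hmeas : Measurable fun x : Fin (n + 1) → ℝ => ∏ i, F i (x i) :=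
        Finset.measurable_prod _ fun i _ => (hF i).comp (measurable_pi_apply i)
      rw [← h.lintegral_comp hmeas]
      simp_rw [MeasurableEquiv.piFinSuccAbove_symm_apply, Fin.insertNthEquiv,
        Fin.prod_univ_succ, Fin.insertNth_zero]
      simp only [Fin.zero_succAbove, cast_eq, Equiv.coe_fn_mk, Fin.cons_zero, Fin.cons_succ]
      have h2 : Measurable fun x : Fin n → ℝ => ∏ j : Fin n, F j.succ (x j) :=
        Finset.measurable_prod _ fun i _ => (hF _).comp (measurable_pi_apply i)
      rw [lintegral_prod_mul (hF 0).aemeasurable h2.aemeasurable,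
        ih (fun j => F j.succ) (fun j => hF _)]

/-- A product of measures with densities is the measure with the product density. -/
theorem pi_withDensity {k : ℕ} (h : Fin k → ℝ → ℝ)
    (hh : ∀ i, Measurable fun y => ENNReal.ofReal (h i y)) :
    (Measure.pi fun i => volume.withDensity fun y => ENNReal.ofReal (h i y)) =
      (volume : Measure (Fin k → ℝ)).withDensity
        fun x => ∏ i, ENNReal.ofReal (h i (x i)) := by
  refine Measure.pi_eq (μ := fun i => volume.withDensity fun y => ENNReal.ofReal (h i y)) fun s hs => ?_
  rw [withDensity_apply _ (MeasurableSet.univ_pi hs)]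
  have hind : ∀ x : Fin k → ℝ, (Set.pi Set.univ s).indicator
      (fun x => ∏ i, ENNReal.ofReal (h i (x i))) x
      = ∏ i, (s i).indicator (fun y => ENNReal.ofReal (h i y)) (x i) := by
    intro x
    by_cases hx : x ∈ Set.pi Set.univ s
    · rw [Set.indicator_of_mem hx]
      exact Finset.prod_congr rfl fun i _ =>
        (Set.indicator_of_mem (hx i (Set.mem_univ i))
          fun y => ENNReal.ofReal (h i y)).symm
    · rw [Set.indicator_of_notMem hx]
      rw [Set.mem_univ_pi] at hx
      push_neg at hx
      obtain ⟨i, hi⟩ := hx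
      exact (Finset.prod_eq_zero (Finset.mem_univ i)
        (Set.indicator_of_notMem hi _)).symm
  calc ∫⁻ x in Set.pi Set.univ s, ∏ i, ENNReal.ofReal (h i (x i))
      = ∫⁻ x, (Set.pi Set.univ s).indicator
          (fun x => ∏ i, ENNReal.ofReal (h i (x i))) x :=
        (lintegral_indicator (MeasurableSet.univ_pi hs) _).symm
    _ = ∫⁻ x, ∏ i, (s i).indicator (fun y => ENNReal.ofReal (h i y)) (x i)
          ∂(Measure.pi fun _ : Fin k => volume) := by
        rw [← volume_pi]; exact lintegral_congr hind
    _ = ∏ i, ∫⁻ y, (s i).indicator (fun y => ENNReal.ofReal (h i y)) y :=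
        lintegral_fin_prod _ _ (fun i => (hh i).indicator (hs i))
    _ = ∏ i, (volume.withDensity fun y => ENNReal.ofReal (h i y)) (s i) := by
        refine Finset.prod_congr rfl fun i _ => ?_
        rw [lintegral_indicator (hs i), withDensity_apply _ (hs i)]

/-- Shifting the Laplace measure translates its density. -/
theorem laplaceMeasure_map_add (b a : ℝ) :
    (laplaceMeasure b).map (fun y => a + y) =
      volume.withDensity fun y =>
        ENNReal.ofReal ((1 / (2 * b)) * Real.exp (-|y - a| / b)) := by
  refine Measure.ext fun A hA => ?_
  rw [Measure.map_apply (measurable_const_add a) hA, laplaceMeasure,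
    withDensity_apply _ ((measurable_const_add a) hA), withDensity_apply _ hA]
  have := (map_add_left_eq_self (volume : Measure ℝ) a)
  calc ∫⁻ x in (fun y => a + y) ⁻¹' A,
        ENNReal.ofReal ((1 / (2 * b)) * Real.exp (-|x| / b))
      = ∫⁻ x in (fun y => a + y) ⁻¹' A,
          ENNReal.ofReal ((1 / (2 * b)) * Real.exp (-|(a + x) - a| / b)) := by
        apply lintegral_congr; intro x; rw [add_sub_cancel_left]
    _ = ∫⁻ y in A, ENNReal.ofReal ((1 / (2 * b)) * Real.exp (-|y - a| / b))
          ∂((volume : Measure ℝ).map (fun y => a + y)) :=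
        (setLIntegral_map hA (measurable_dens b a) (measurable_const_add a)).symm
    _ = ∫⁻ y in A, ENNReal.ofReal ((1 / (2 * b)) * Real.exp (-|y - a| / b)) := by
        rw [map_add_left_eq_self]

/-- The pushforward of a product of Laplace measures under a translation is the product
of the coordinate-wise pushforwards. -/
theorem pi_laplace_map_add {k : ℕ} (b : ℝ) (c : Fin k → ℝ) :
    (Measure.pi fun _ : Fin k => laplaceMeasure b).map (fun y => c + y) =
      Measure.pi fun i => (laplaceMeasure b).map (fun y => c i + y) := by
  haveI : ∀ i : Fin k, SigmaFinite ((laplaceMeasure b).map (fun y => c i + y)) := fun i => by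
    rw [laplaceMeasure_map_add]; infer_instance
  have hadd : Measurable fun y : Fin k → ℝ => c + y :=
    measurable_pi_iff.mpr fun i => by simp only [Pi.add_apply]; fun_prop
  refine (Measure.pi_eq (μ := fun i => (laplaceMeasure b).map (fun y => c i + y)) fun s hs => ?_).symm
  rw [Measure.map_apply hadd (MeasurableSet.univ_pi hs)]
  have hpre : (fun y : Fin k → ℝ => c + y) ⁻¹' Set.pi Set.univ s
      = Set.pi Set.univ fun i => (fun y => c i + y) ⁻¹' s i := by
    ext y; simp [Set.mem_pi]
  rw [hpre, Measure.pi_pi]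
  exact Finset.prod_congr rfl fun i _ =>
    (Measure.map_apply (measurable_const_add (c i)) (hs i)).symm

/-- The Laplace mechanism as a measure with explicit density. -/
theorem map_add_eq_withDensity {k : ℕ} (b : ℝ) (a : Fin k → ℝ) :
    (Measure.pi fun _ : Fin k => laplaceMeasure b).map (fun y => a + y) =
      (volume : Measure (Fin k → ℝ)).withDensity
        fun x => ∏ i, ENNReal.ofReal ((1 / (2 * b)) * Real.exp (-|x i - a i| / b)) := by
  rw [pi_laplace_map_add]
  have h1 : (fun i : Fin k => (laplaceMeasure b).map (fun y => a i + y))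
      = fun i => volume.withDensity fun y =>
          ENNReal.ofReal ((1 / (2 * b)) * Real.exp (-|y - a i| / b)) :=
    funext fun i => laplaceMeasure_map_add b (a i)
  rw [h1, pi_withDensity _ (fun i => measurable_dens b (a i))]

/-- Pointwise domination of the shifted Laplace density. -/
theorem laplace_density_shift_le {b : ℝ} (hb : 0 < b) (a y : ℝ) :
    (1 / (2 * b)) * Real.exp (-|y - a| / b) ≤
      Real.exp (|a| / b) * ((1 / (2 * b)) * Real.exp (-|y| / b)) := by
  have h1 : -|y - a| ≤ |a| + -|y| := by
    have h := abs_sub_abs_le_abs_sub y (y - a)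
    have h2 : y - (y - a) = a := by ring
    rw [h2] at h
    linarith
  have h2 : Real.exp (-|y - a| / b) ≤ Real.exp (|a| / b) * Real.exp (-|y| / b) := by
    rw [← Real.exp_add, ← add_div]
    exact Real.exp_le_exp.mpr (by gcongr)
  have h0 : (0:ℝ) ≤ 1 / (2 * b) := by positivity
  calc (1 / (2 * b)) * Real.exp (-|y - a| / b)
      ≤ (1 / (2 * b)) * (Real.exp (|a| / b) * Real.exp (-|y| / b)) :=
        mul_le_mul_of_nonneg_left h2 h0
    _ = Real.exp (|a| / b) * ((1 / (2 * b)) * Real.exp (-|y| / b)) := by ring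

end LaplaceDP

open LaplaceDP in
/-- The Laplace mechanism: adding i.i.d. `Laplace(Δf/ε)` noise to each coordinate of a
query `f` with ℓ₁-sensitivity `Δf` is `(ε, 0)`-differentially private. -/
theorem laplace_mechanism_dp {DB : Type*} (adj : DB → DB → Prop) {k : ℕ}
    (f : DB → (Fin k → ℝ)) (Δf ε : ℝ) (hΔf : 0 < Δf) (hε : 0 < ε)
    (hsens : ∀ D D', adj D D' → ∑ i, |f D i - f D' i| ≤ Δf) :
    ∀ D D', adj D D' → ∀ S : Set (Fin k → ℝ), MeasurableSet S →
      ((Measure.pi fun _ : Fin k => laplaceMeasure (Δf / ε)).map (fun y => f D + y)) S ≤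
        ENNReal.ofReal (Real.exp ε) *
          ((Measure.pi fun _ : Fin k => laplaceMeasure (Δf / ε)).map (fun y => f D' + y)) S := by
  intro D D' hadj S hS
  set b : ℝ := Δf / ε with hbdef
  have hb : 0 < b := div_pos hΔf hε
  rw [map_add_eq_withDensity b (f D), map_add_eq_withDensity b (f D'),
    withDensity_apply _ hS, withDensity_apply _ hS]
  -- pointwise density bound
  have hsum : ∑ i, |f D i - f D' i| ≤ Δf := hsens D D' hadj
  have hsumdiv : (∑ i, |f D i - f D' i|) / b ≤ ε := by
    have hεb : ε * (Δf / ε) = Δf := by field_simp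
    rw [div_le_iff₀ hb, hbdef, hεb]
    exact hsum
  have key : ∀ x : Fin k → ℝ,
      (∏ i, ENNReal.ofReal ((1 / (2 * b)) * Real.exp (-|x i - f D i| / b)))
        ≤ ENNReal.ofReal (Real.exp ε) *
          ∏ i, ENNReal.ofReal ((1 / (2 * b)) * Real.exp (-|x i - f D' i| / b)) := by
    intro x
    calc (∏ i, ENNReal.ofReal ((1 / (2 * b)) * Real.exp (-|x i - f D i| / b)))
        ≤ ∏ i, (ENNReal.ofReal (Real.exp (|f D i - f D' i| / b)) *
            ENNReal.ofReal ((1 / (2 * b)) * Real.exp (-|x i - f D' i| / b))) := by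
          refine Finset.prod_le_prod' fun i _ => ?_
          rw [← ENNReal.ofReal_mul (Real.exp_nonneg _)]
          apply ENNReal.ofReal_le_ofReal
          have hx : x i - f D i = (x i - f D' i) - (f D i - f D' i) := by ring
          rw [hx]
          exact laplace_density_shift_le hb (f D i - f D' i) (x i - f D' i)
      _ = (∏ i, ENNReal.ofReal (Real.exp (|f D i - f D' i| / b))) *
            ∏ i, ENNReal.ofReal ((1 / (2 * b)) * Real.exp (-|x i - f D' i| / b)) :=
          Finset.prod_mul_distrib
      _ ≤ ENNReal.ofReal (Real.exp ε) *
            ∏ i, ENNReal.ofReal ((1 / (2 * b)) * Real.exp (-|x i - f D' i| / b)) := by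
          gcongr
          rw [← ENNReal.ofReal_prod_of_nonneg (fun i _ => Real.exp_nonneg _),
            ← Real.exp_sum]
          apply ENNReal.ofReal_le_ofReal
          apply Real.exp_le_exp.mpr
          rw [← Finset.sum_div]
          exact hsumdiv
  calc ∫⁻ x in S, ∏ i, ENNReal.ofReal ((1 / (2 * b)) * Real.exp (-|x i - f D i| / b))
      ≤ ∫⁻ x in S, ENNReal.ofReal (Real.exp ε) *
          ∏ i, ENNReal.ofReal ((1 / (2 * b)) * Real.exp (-|x i - f D' i| / b)) :=
        lintegral_mono key
    _ = ENNReal.ofReal (Real.exp ε) *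
          ∫⁻ x in S, ∏ i, ENNReal.ofReal ((1 / (2 * b)) * Real.exp (-|x i - f D' i| / b)) :=
        lintegral_const_mul _ (Finset.measurable_prod _ fun i _ =>
          (measurable_dens b (f D' i)).comp (measurable_pi_apply i))
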